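/- If P is a positive definite real n×n matrix with P ≥ I and a real n×n matrix F satisfies F P Fᵀ − P + I ≤ 0 (in the Loewner order), then F is Schur stable, i.e., every eigenvalue of F has absolute value strictly less than 1. -/

import Mathlib

open Matrix Finset
open scoped RealInnerProductSpace ComplexOrder

/-- Operator (spectral) norm of a real matrix, induced by Euclidean norms. -/
noncomputable def opNorm {m n : Type*} [Fintype m] [Fintype n] [DecidableEq n]
    (M : Matrix m n ℝ) : ℝ :=
  ‖LinearMap.toContinuousLinearMap (Matrix.toEuclideanLin M)‖

/-- A real square matrix is Schur stable if all its (complex) eigenvalues have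
modulus strictly less than one. -/
def SchurStable {n : Type*} [Fintype n] [DecidableEq n] (F : Matrix n n ℝ) : Prop :=
  ∀ μ ∈ spectrum ℂ (F.map (algebraMap ℝ ℂ)), ‖μ‖ < 1

/-- Complexification of a real positive semidefinite matrix is positive semidefinite. -/
lemma posSemidef_map_complex {n : Type*} [Fintype n] {A : Matrix n n ℝ}
    (hA : A.PosSemidef) : (A.map (algebraMap ℝ ℂ)).PosSemidef := by
  obtain ⟨B, rfl⟩ : ∃ B : Matrix n n ℝ, A = Bᴴ * B := by
    classical
    open scoped MatrixOrder in
    exact CStarAlgebra.nonneg_iff_eq_star_mul_self.mp hA.nonneg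
  have hmap : (Bᴴ * B).map (algebraMap ℝ ℂ)
      = (B.map (algebraMap ℝ ℂ))ᴴ * (B.map (algebraMap ℝ ℂ)) := by
    rw [Matrix.map_mul]
    congr 1
    rw [Matrix.conjTranspose_map (algebraMap ℝ ℂ)]
    intro x
    simp [Complex.conj_ofReal]
  rw [hmap]
  exact Matrix.posSemidef_conjTranspose_mul_self _

lemma mem_spectrum_transpose {n : Type*} [Fintype n] [DecidableEq n]
    {M : Matrix n n ℂ} {μ : ℂ} (h : μ ∈ spectrum ℂ M) : μ ∈ spectrum ℂ Mᵀ := by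
  rw [spectrum.mem_iff] at h ⊢
  intro hu
  apply h
  have : algebraMap ℂ (Matrix n n ℂ) μ - M = (algebraMap ℂ (Matrix n n ℂ) μ - Mᵀ)ᵀ := by
    simp [Matrix.transpose_sub, Matrix.algebraMap_eq_diagonal, Matrix.diagonal_transpose]
  rw [this]
  rw [Matrix.isUnit_iff_isUnit_det, Matrix.det_transpose, ← Matrix.isUnit_iff_isUnit_det]
  exact hu

lemma exists_eigenvector_of_mem_spectrum {n : Type*} [Fintype n] [DecidableEq n]
    {M : Matrix n n ℂ} {μ : ℂ} (h : μ ∈ spectrum ℂ M) :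
    ∃ v : n → ℂ, v ≠ 0 ∧ M *ᵥ v = μ • v := by
  have hev : Module.End.HasEigenvalue (Matrix.toLinAlgEquiv' M) μ :=
    Module.End.HasEigenvalue.of_mem_spectrum (by rwa [AlgEquiv.spectrum_eq])
  obtain ⟨v, hv, hv0⟩ := hev.exists_hasEigenvector
  refine ⟨v, hv0, ?_⟩
  have h2 := Module.End.mem_eigenspace_iff.mp hv
  rwa [Matrix.toLinAlgEquiv'_apply] at h2

/-- If `P ⪰ I` is positive definite and `F P Fᵀ - P + I ⪯ 0`
(Loewner order), then `F` is Schur stable. -/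
theorem stmt0 {n : Type*} [Fintype n] [DecidableEq n]
    (P F : Matrix n n ℝ) (hP : P.PosDef) (hPI : (P - 1).PosSemidef)
    (hLyap : (-(F * P * Fᵀ - P + 1)).PosSemidef) :
    SchurStable F := by
  intro μ hμ
  set f := algebraMap ℝ ℂ
  set Fc := F.map f with hFc
  set Pc := P.map f with hPc
  -- eigenvector of the transpose
  obtain ⟨v, hv0, hv⟩ := exists_eigenvector_of_mem_spectrum (mem_spectrum_transpose hμ)
  -- basic quantities
  set Q : ℂ := star v ⬝ᵥ (Pc *ᵥ v) with hQdef
  set N : ℂ := star v ⬝ᵥ v with hNdef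
  -- N has positive real part
  have hNpos : 0 < N.re := by
    have h1 : (1 : Matrix n n ℂ).PosDef := Matrix.PosDef.one
    have := h1.re_dotProduct_pos (x := v) hv0
    simpa [hNdef, Matrix.one_mulVec] using this
  -- Q ≥ N (real parts)
  have hQN : N.re ≤ Q.re := by
    have hps := posSemidef_map_complex hPI
    have h2 := hps.re_dotProduct_nonneg v
    have hmap : (P - 1).map f = Pc - 1 := by
      have h0 : (P - 1).map f = f.mapMatrix (P - 1) := rfl
      rw [h0, map_sub, _root_.map_one]
      rfl
    rw [hmap] at h2
    have : (star v ⬝ᵥ ((Pc - 1) *ᵥ v)) = Q - N := by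
      rw [Matrix.sub_mulVec, dotProduct_sub, Matrix.one_mulVec]
    rw [this] at h2
    simp only [RCLike.re_to_complex, Complex.sub_re] at h2
    linarith
  have hQpos : 0 < Q.re := lt_of_lt_of_le hNpos hQN
  -- the key eigenvector identity for the Lyapunov term
  have hstar : star v ᵥ* Fc = (starRingEnd ℂ μ) • star v := by
    have h1 : star ((Fc)ᵀ *ᵥ v) = star v ᵥ* ((Fc)ᵀ)ᴴ := Matrix.star_mulVec _ _
    have h2 : ((Fc)ᵀ)ᴴ = Fc := by
      ext i j
      simp [Matrix.conjTranspose_apply, hFc, Complex.conj_ofReal, f]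
    rw [h2] at h1
    rw [← h1, hv, star_smul]
    rfl
  have hT : star v ⬝ᵥ ((Fc * Pc * (Fc)ᵀ) *ᵥ v)
      = ((starRingEnd ℂ μ) * μ) * Q := by
    rw [← Matrix.mulVec_mulVec, ← Matrix.mulVec_mulVec, hv, Matrix.mulVec_smul,
      Matrix.dotProduct_mulVec, hstar, smul_dotProduct,
      dotProduct_smul, smul_eq_mul, smul_eq_mul, ← hQdef]
    ring
  -- complexify the Lyapunov inequality
  have hps := posSemidef_map_complex hLyap
  have hmap : (-(F * P * Fᵀ - P + 1)).map f = -(Fc * Pc * (Fc)ᵀ - Pc + 1) := by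
    have h0 : (-(F * P * Fᵀ - P + 1)).map f = f.mapMatrix (-(F * P * Fᵀ - P + 1)) := rfl
    rw [h0, map_neg, map_add, map_sub, _root_.map_mul, _root_.map_mul, _root_.map_one]
    simp only [RingHom.mapMatrix_apply]
    rw [Matrix.transpose_map]
  have h3 := hps.re_dotProduct_nonneg v
  rw [hmap] at h3
  have hexp : star v ⬝ᵥ ((-(Fc * Pc * (Fc)ᵀ - Pc + 1)) *ᵥ v)
      = -(((starRingEnd ℂ μ) * μ) * Q - Q + N) := by
    rw [Matrix.neg_mulVec, dotProduct_neg]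
    congr 1
    rw [Matrix.add_mulVec, Matrix.sub_mulVec, dotProduct_add, dotProduct_sub, hT,
      Matrix.one_mulVec]
  rw [hexp] at h3
  -- extract real parts
  have hcm : ((starRingEnd ℂ μ) * μ) = (Complex.normSq μ : ℂ) := by
    rw [mul_comm, Complex.mul_conj]
  rw [hcm] at h3
  have hre : ((Complex.normSq μ : ℂ) * Q).re = Complex.normSq μ * Q.re :=
    Complex.re_ofReal_mul _ _
  simp only [RCLike.re_to_complex, Complex.neg_re, Complex.add_re, Complex.sub_re, hre] at h3
  -- conclude
  have hsq : Complex.normSq μ < 1 := by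
    nlinarith [hNpos, hQpos, hQN]
  have : ‖μ‖ ^ 2 = Complex.normSq μ := by
    rw [Complex.sq_norm]
  nlinarith [norm_nonneg μ, this]
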